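/- arXiv:1803.03931 — 4 statements merged into one kernel-verified Lean document; each statement's English description precedes it below -/
import Mathlib

section
/- Let A in GL_N(k[x]) be straight, and let α = (a,b) be a point of k × k^N. Then the Zariski closure of the forward orbit {f_A^n(α) : n ≥ 0} equals k × C, where C is the Zariski closure in k^N of the orbit 𝔾_A·b = {g·b : g ∈ 𝔾_A}. -/
noncomputable section

/-- Evaluate a polynomial matrix at a point of `k`. -/
def evalMat {k : Type*} [CommRing k] {N : ℕ} (A : Matrix (Fin N) (Fin N) (Polynomial k))
    (x : k) : Matrix (Fin N) (Fin N) k :=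
  A.map (Polynomial.eval x)

/-- The skew-linear self-map `f_A : (x, y) ↦ (x + 1, A(x)·y)` of `k × k^N`. -/
def skewMap {k : Type*} [CommRing k] {N : ℕ} (A : Matrix (Fin N) (Fin N) (Polynomial k)) :
    k × (Fin N → k) → k × (Fin N → k) :=
  fun p => (p.1 + 1, (evalMat A p.1).mulVec p.2)

/-- A subset of `k × k^N` (identified with `k^(N+1)`) is algebraic if it is the zero locus
of a set of polynomials in `N + 1` variables (variable `none` is `x`, variable `some i`
is `yᵢ`). -/
def IsAlg {k : Type*} [CommRing k] {N : ℕ} (V : Set (k × (Fin N → k))) : Prop :=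
  ∃ S : Set (MvPolynomial (Option (Fin N)) k),
    V = {p | ∀ f ∈ S, MvPolynomial.eval (fun i => Option.elim i p.1 p.2) f = 0}

/-- A subset of `k^N` is algebraic if it is the zero locus of a set of polynomials
in `N` variables. -/
def IsAlgN {k : Type*} [CommRing k] {N : ℕ} (W : Set (Fin N → k)) : Prop :=
  ∃ S : Set (MvPolynomial (Fin N) k),
    W = {y | ∀ f ∈ S, MvPolynomial.eval y f = 0}

/-- The group `𝔾_A ⊆ GL_N(k)`: invertible matrices stabilizing the fiber over `0` of every
algebraic subset of `k × k^N` invariant under `f_A`. -/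
def GA {k : Type*} [CommRing k] {N : ℕ} (A : Matrix (Fin N) (Fin N) (Polynomial k)) :
    Set (Matrix (Fin N) (Fin N) k) :=
  {g | IsUnit g.det ∧
    ∀ V : Set (k × (Fin N → k)), IsAlg V → skewMap A '' V = V →
      (fun y => g.mulVec y) '' {y : Fin N → k | ((0 : k), y) ∈ V} =
        {y : Fin N → k | ((0 : k), y) ∈ V}}

/-- The Zariski closure of a subset of `k^N`: the intersection of all algebraic subsets
containing it. -/
def zarClosureN {k : Type*} [CommRing k] {N : ℕ} (S : Set (Fin N → k)) : Set (Fin N → k) :=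
  ⋂₀ {W | IsAlgN W ∧ S ⊆ W}

/-- The Zariski closure of a subset of `k × k^N`. -/
def zarClosure1 {k : Type*} [CommRing k] {N : ℕ} (S : Set (k × (Fin N → k))) :
    Set (k × (Fin N → k)) :=
  ⋂₀ {W | IsAlg W ∧ S ⊆ W}

namespace Stmt7
open MvPolynomial

variable {k : Type*} [Field k] {N : ℕ}

def coords (p : k × (Fin N → k)) : Option (Fin N) → k := fun i => Option.elim i p.1 p.2

lemma isAlg_iff (V : Set (k × (Fin N → k))) :
    IsAlg V ↔ ∃ S : Set (MvPolynomial (Option (Fin N)) k),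
      V = {p | ∀ f ∈ S, MvPolynomial.eval (coords p) f = 0} := Iff.rfl

lemma isAlg_sInter {𝒞 : Set (Set (k × (Fin N → k)))} (h : ∀ W ∈ 𝒞, IsAlg W) :
    IsAlg (⋂₀ 𝒞) := by
  refine ⟨{f | ∃ W ∈ 𝒞, ∀ p ∈ W, MvPolynomial.eval (coords p) f = 0}, ?_⟩
  ext p
  simp only [Set.mem_sInter, Set.mem_setOf_eq]
  constructor
  · rintro hp f ⟨W, hW, hf⟩
    exact hf p (hp W hW)
  · intro hp W hW
    obtain ⟨S, rfl⟩ := h W hW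
    intro f hf
    exact hp f ⟨_, hW, fun q hq => hq f hf⟩

lemma isAlgN_sInter {𝒞 : Set (Set (Fin N → k))} (h : ∀ W ∈ 𝒞, IsAlgN W) :
    IsAlgN (⋂₀ 𝒞) := by
  refine ⟨{f | ∃ W ∈ 𝒞, ∀ y ∈ W, MvPolynomial.eval y f = 0}, ?_⟩
  ext y
  simp only [Set.mem_sInter, Set.mem_setOf_eq]
  constructor
  · rintro hy f ⟨W, hW, hf⟩
    exact hf y (hy W hW)
  · intro hy W hW
    obtain ⟨S, rfl⟩ := h W hW
    intro f hf
    exact hy f ⟨_, hW, fun q hq => hq f hf⟩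

lemma isAlg_zarClosure1 (S : Set (k × (Fin N → k))) : IsAlg (zarClosure1 S) :=
  isAlg_sInter fun _ hW => hW.1

lemma subset_zarClosure1 (S : Set (k × (Fin N → k))) : S ⊆ zarClosure1 S :=
  Set.subset_sInter fun _ hW => hW.2

lemma zarClosure1_subset {S W : Set (k × (Fin N → k))} (hW : IsAlg W) (hSW : S ⊆ W) :
    zarClosure1 S ⊆ W :=
  Set.sInter_subset_of_mem ⟨hW, hSW⟩

lemma zarClosure1_mono {S T : Set (k × (Fin N → k))} (h : S ⊆ T) :
    zarClosure1 S ⊆ zarClosure1 T :=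
  Set.subset_sInter fun W hW => Set.sInter_subset_of_mem ⟨hW.1, h.trans hW.2⟩

lemma subset_zarClosureN (S : Set (Fin N → k)) : S ⊆ zarClosureN S :=
  Set.subset_sInter fun _ hW => hW.2

lemma zarClosureN_subset {S W : Set (Fin N → k)} (hW : IsAlgN W) (hSW : S ⊆ W) :
    zarClosureN S ⊆ W :=
  Set.sInter_subset_of_mem ⟨hW, hSW⟩

def vIdeal (V : Set (k × (Fin N → k))) : Ideal (MvPolynomial (Option (Fin N)) k) where
  carrier := {f | ∀ p ∈ V, MvPolynomial.eval (coords p) f = 0}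
  zero_mem' := fun p _ => by simp
  add_mem' := fun hf hg p hp => by simp [hf p hp, hg p hp]
  smul_mem' := fun c f hf p hp => by simp [smul_eq_mul, hf p hp]

lemma eq_zeroLocus_vIdeal {V : Set (k × (Fin N → k))} (h : IsAlg V) :
    V = {p | ∀ f ∈ vIdeal V, MvPolynomial.eval (coords p) f = 0} := by
  obtain ⟨S, rfl⟩ := h
  ext p
  constructor
  · intro hp f hf
    exact hf p hp
  · intro hp f hf
    exact hp f fun q hq => hq f hf

lemma vIdeal_anti {V W : Set (k × (Fin N → k))} (h : V ⊆ W) : vIdeal W ≤ vIdeal V :=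
  fun _ hf p hp => hf p (h hp)


lemma eval_aeval_comp (x : Option (Fin N) → k) (P : Option (Fin N) → MvPolynomial (Option (Fin N)) k)
    (f : MvPolynomial (Option (Fin N)) k) :
    MvPolynomial.eval x (MvPolynomial.aeval P f) = MvPolynomial.eval (fun j => MvPolynomial.eval x (P j)) f := by
  induction f using MvPolynomial.induction_on with
  | C => simp only [MvPolynomial.aeval_C, MvPolynomial.eval_C, MvPolynomial.algebraMap_eq]
  | add p q hp hq => simp only [map_add, hp, hq]
  | mul_X p i hp => simp only [map_mul, MvPolynomial.aeval_X, MvPolynomial.eval_X, hp]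

def IsPolyMap (φ : k × (Fin N → k) → k × (Fin N → k)) : Prop :=
  ∃ P : Option (Fin N) → MvPolynomial (Option (Fin N)) k,
    ∀ p j, MvPolynomial.eval (coords p) (P j) = coords (φ p) j

lemma IsPolyMap.preimage {φ : k × (Fin N → k) → k × (Fin N → k)} (hφ : IsPolyMap φ)
    {V : Set (k × (Fin N → k))} (hV : IsAlg V) : IsAlg (φ ⁻¹' V) := by
  obtain ⟨P, hP⟩ := hφ
  obtain ⟨S, rfl⟩ := hV
  refine ⟨(MvPolynomial.aeval P) '' S, ?_⟩
  ext p
  simp only [Set.mem_preimage, Set.mem_setOf_eq]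
  constructor
  · rintro h _ ⟨g, hg, rfl⟩
    show MvPolynomial.eval (coords p) _ = 0
    rw [eval_aeval_comp, funext (hP p)]
    exact h g hg
  · intro h f hf
    have := h (MvPolynomial.aeval P f) ⟨f, hf, rfl⟩
    rwa [show (fun i => Option.elim i p.1 p.2) = coords p from rfl, eval_aeval_comp,
      funext (hP p)] at this

lemma image_eq_preimage {X : Type*} {φ ψ : X → X} (h1 : ∀ p, ψ (φ p) = p)
    (h2 : ∀ p, φ (ψ p) = p) (V : Set X) : φ '' V = ψ ⁻¹' V := by
  ext p
  constructor
  · rintro ⟨q, hq, rfl⟩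
    simpa [h1] using hq
  · intro hp
    exact ⟨ψ p, hp, h2 p⟩

lemma closure_image {φ ψ : k × (Fin N → k) → k × (Fin N → k)} (hφ : IsPolyMap φ)
    (hψ : IsPolyMap ψ) (h1 : ∀ p, ψ (φ p) = p) (h2 : ∀ p, φ (ψ p) = p)
    (S : Set (k × (Fin N → k))) :
    φ '' zarClosure1 S = zarClosure1 (φ '' S) := by
  rw [image_eq_preimage h1 h2]
  apply subset_antisymm
  · have hsub : zarClosure1 S ⊆ φ ⁻¹' (zarClosure1 (φ '' S)) :=
      zarClosure1_subset (hφ.preimage (isAlg_zarClosure1 _))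
        (fun q hq => subset_zarClosure1 _ ⟨q, hq, rfl⟩)
    intro p hp
    have := hsub hp
    rwa [Set.mem_preimage, h2 p] at this
  · refine zarClosure1_subset (hψ.preimage (isAlg_zarClosure1 _)) ?_
    rintro _ ⟨q, hq, rfl⟩
    show ψ (φ q) ∈ zarClosure1 S
    rw [h1 q]
    exact subset_zarClosure1 S hq

lemma eval_polyEval (x : Option (Fin N) → k) (t : MvPolynomial (Option (Fin N)) k)
    (q : Polynomial k) :
    MvPolynomial.eval x (Polynomial.eval₂ MvPolynomial.C t q) = q.eval (MvPolynomial.eval x t) := by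
  rw [Polynomial.hom_eval₂]
  have h : (MvPolynomial.eval x).comp (MvPolynomial.C (σ := Option (Fin N))) = RingHom.id k := by
    ext a
    simp
  rw [h]
  rfl

def matRow (B : Matrix (Fin N) (Fin N) (Polynomial k)) (t : MvPolynomial (Option (Fin N)) k)
    (i : Fin N) : MvPolynomial (Option (Fin N)) k :=
  ∑ j, Polynomial.eval₂ MvPolynomial.C t (B i j) * MvPolynomial.X (some j)

lemma eval_matRow (B : Matrix (Fin N) (Fin N) (Polynomial k))
    (t : MvPolynomial (Option (Fin N)) k) (p : k × (Fin N → k)) (i : Fin N) :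
    MvPolynomial.eval (coords p) (matRow B t i) =
      (evalMat B (MvPolynomial.eval (coords p) t)).mulVec p.2 i := by
  simp [matRow, evalMat, Matrix.mulVec, dotProduct, eval_polyEval, coords]

lemma evalMat_mul (B C : Matrix (Fin N) (Fin N) (Polynomial k)) (x : k) :
    evalMat (B * C) x = evalMat B x * evalMat C x := by
  show (B * C).map ⇑(Polynomial.evalRingHom x) = B.map ⇑(Polynomial.evalRingHom x) * C.map ⇑(Polynomial.evalRingHom x)
  exact Matrix.map_mul

lemma evalMat_one (x : k) : evalMat (1 : Matrix (Fin N) (Fin N) (Polynomial k)) x = 1 :=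
  Matrix.map_one _ (by simp) (by simp)

lemma isPolyMap_skew (A : Matrix (Fin N) (Fin N) (Polynomial k)) : IsPolyMap (skewMap A) := by
  refine ⟨fun j => Option.elim j (MvPolynomial.X none + 1) (fun i => matRow A (MvPolynomial.X none) i), ?_⟩
  rintro p (_ | i)
  · simp [skewMap, coords]
  · show MvPolynomial.eval (coords p) (matRow A (MvPolynomial.X none) i) = _
    rw [eval_matRow]
    simp [skewMap, coords]

def invMap (A : Matrix (Fin N) (Fin N) (Polynomial k)) :
    k × (Fin N → k) → k × (Fin N → k) :=
  fun p => (p.1 - 1, (evalMat A⁻¹ (p.1 - 1)).mulVec p.2)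

lemma isPolyMap_inv (A : Matrix (Fin N) (Fin N) (Polynomial k)) : IsPolyMap (invMap A) := by
  refine ⟨fun j => Option.elim j (MvPolynomial.X none - 1) (fun i => matRow A⁻¹ (MvPolynomial.X none - 1) i), ?_⟩
  rintro p (_ | i)
  · simp [invMap, coords]
  · show MvPolynomial.eval (coords p) (matRow A⁻¹ (MvPolynomial.X none - 1) i) = _
    rw [eval_matRow]
    simp [invMap, coords]

lemma invMap_skewMap (A : Matrix (Fin N) (Fin N) (Polynomial k)) (hA : IsUnit A.det)
    (p : k × (Fin N → k)) : invMap A (skewMap A p) = p := by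
  simp only [invMap, skewMap, add_sub_cancel_right, Matrix.mulVec_mulVec, ← evalMat_mul,
    Matrix.nonsing_inv_mul A hA, evalMat_one, Matrix.one_mulVec]

lemma skewMap_invMap (A : Matrix (Fin N) (Fin N) (Polynomial k)) (hA : IsUnit A.det)
    (p : k × (Fin N → k)) : skewMap A (invMap A p) = p := by
  simp only [skewMap, invMap, sub_add_cancel, Matrix.mulVec_mulVec, ← evalMat_mul,
    Matrix.mul_nonsing_inv A hA, evalMat_one, Matrix.one_mulVec]


def prodMat (A : Matrix (Fin N) (Fin N) (Polynomial k)) (a : k) : ℕ → Matrix (Fin N) (Fin N) k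
  | 0 => 1
  | n + 1 => evalMat A (a + n) * prodMat A a n

lemma iterate_skewMap (A : Matrix (Fin N) (Fin N) (Polynomial k)) (a : k) (b : Fin N → k) :
    ∀ n : ℕ, (skewMap A)^[n] (a, b) = (a + n, (prodMat A a n).mulVec b)
  | 0 => by simp [prodMat]
  | n + 1 => by
    rw [Function.iterate_succ_apply', iterate_skewMap A a b n]
    simp only [skewMap, prodMat, ← Matrix.mulVec_mulVec]
    refine Prod.ext ?_ rfl
    push_cast
    ring

lemma isUnit_det_evalMat {A : Matrix (Fin N) (Fin N) (Polynomial k)} (hA : IsUnit A.det)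
    (x : k) : IsUnit (evalMat A x).det := by
  have h : (evalMat A x).det = Polynomial.eval x A.det := by
    rw [show evalMat A x = (Polynomial.evalRingHom x).mapMatrix A from rfl, ← RingHom.map_det]
    rfl
  rw [h]
  exact hA.map (Polynomial.evalRingHom x)

lemma isUnit_det_prodMat {A : Matrix (Fin N) (Fin N) (Polynomial k)} (hA : IsUnit A.det)
    (a : k) : ∀ n, IsUnit (prodMat A a n).det
  | 0 => by simp [prodMat]
  | n + 1 => by
    rw [prodMat, Matrix.det_mul]
    exact (isUnit_det_evalMat hA _).mul (isUnit_det_prodMat hA a n)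

lemma mulVec_image_mem {M : Matrix (Fin N) (Fin N) k} (hM : IsUnit M.det)
    {V₀ : Set (Fin N → k)} (him : (fun y => M.mulVec y) '' V₀ = V₀) {b : Fin N → k}
    (hb : M.mulVec b ∈ V₀) : b ∈ V₀ := by
  rw [← him] at hb
  obtain ⟨y, hy, hyb⟩ := hb
  have hinj : Function.Injective (M.mulVec) := Matrix.mulVec_injective_iff_isUnit.mpr ((Matrix.isUnit_iff_isUnit_det M).mpr hM)
  rwa [← hinj hyb]

/-- From invariance `skewMap A '' V = V` for `V = {p | p.2 ∈ V₀}`, each `A(t)` stabilizes `V₀`. -/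
lemma step_stab {A : Matrix (Fin N) (Fin N) (Polynomial k)} {V₀ : Set (Fin N → k)}
    (hinv : skewMap A '' {p : k × (Fin N → k) | p.2 ∈ V₀} = {p : k × (Fin N → k) | p.2 ∈ V₀})
    (t : k) : (fun y => (evalMat A t).mulVec y) '' V₀ = V₀ := by
  apply subset_antisymm
  · rintro _ ⟨y, hy, rfl⟩
    have h1 : skewMap A (t, y) ∈ skewMap A '' {p : k × (Fin N → k) | p.2 ∈ V₀} :=
      ⟨(t, y), hy, rfl⟩
    rw [hinv] at h1
    exact h1
  · intro z hz
    have h1 : ((t + 1 : k), z) ∈ skewMap A '' {p : k × (Fin N → k) | p.2 ∈ V₀} := by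
      rw [hinv]; exact hz
    obtain ⟨⟨s, y⟩, hy, heq⟩ := h1
    have hs : s = t := by
      have := congrArg Prod.fst heq
      simpa [skewMap] using this
    have hz' := congrArg Prod.snd heq
    simp only [skewMap] at hz'
    subst hs
    exact ⟨y, hy, hz'⟩

lemma prodMat_stab {A : Matrix (Fin N) (Fin N) (Polynomial k)} {V₀ : Set (Fin N → k)}
    (hinv : skewMap A '' {p : k × (Fin N → k) | p.2 ∈ V₀} = {p : k × (Fin N → k) | p.2 ∈ V₀})
    (a : k) : ∀ n, (fun y => (prodMat A a n).mulVec y) '' V₀ = V₀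
  | 0 => by simp [prodMat]
  | n + 1 => by
    have hcomp : (fun y => (prodMat A a (n + 1)).mulVec y) =
        (fun y => (evalMat A (a + n)).mulVec y) ∘ (fun y => (prodMat A a n).mulVec y) := by
      funext y
      simp [prodMat, Matrix.mulVec_mulVec]
    rw [hcomp, Set.image_comp, prodMat_stab hinv a n, step_stab hinv]


lemma isAlg_cylinder {W : Set (Fin N → k)} (hW : IsAlgN W) :
    IsAlg {p : k × (Fin N → k) | p.2 ∈ W} := by
  obtain ⟨S, rfl⟩ := hW
  refine ⟨(MvPolynomial.rename some) '' S, ?_⟩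
  ext p
  simp only [Set.mem_setOf_eq]
  constructor
  · rintro h _ ⟨g, hg, rfl⟩
    show MvPolynomial.eval (coords p) _ = 0
    rw [MvPolynomial.eval_rename]
    exact h g hg
  · intro h g hg
    have := h (MvPolynomial.rename some g) ⟨g, hg, rfl⟩
    rwa [show (fun i => Option.elim i p.1 p.2) = coords p from rfl,
      MvPolynomial.eval_rename] at this

lemma isAlg_cylClosureN (S : Set (Fin N → k)) :
    IsAlg {p : k × (Fin N → k) | p.2 ∈ zarClosureN S} := by
  have h : {p : k × (Fin N → k) | p.2 ∈ zarClosureN S} =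
      ⋂₀ ((fun W => {p : k × (Fin N → k) | p.2 ∈ W}) '' {W | IsAlgN W ∧ S ⊆ W}) := by
    ext p
    simp [zarClosureN]
  rw [h]
  apply isAlg_sInter
  rintro _ ⟨W, hW, rfl⟩
  exact isAlg_cylinder hW.1

end Stmt7

open Stmt7


/-- Proposition (Ghioca–Xie, Proposition 3.10): if `A ∈ GL_N(k[x])` is straight and
`α = (a, b) ∈ k × k^N`, then the Zariski closure of the `f_A`-orbit of `α` equals
`k × C`, where `C` is the Zariski closure of the orbit `𝔾_A · b`. -/
theorem stmt7 {k : Type*} [Field k] [IsAlgClosed k] [CharZero k] {N : ℕ} (hN : 0 < N)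
    (A : Matrix (Fin N) (Fin N) (Polynomial k)) (hA : IsUnit A.det)
    (hstraight : ∀ V : Set (k × (Fin N → k)), IsAlg V → skewMap A '' V = V →
      ∃ V₀ : Set (Fin N → k), IsAlgN V₀ ∧ V = {p : k × (Fin N → k) | p.2 ∈ V₀})
    (a : k) (b : Fin N → k) :
    zarClosure1 {p : k × (Fin N → k) | ∃ n : ℕ, (skewMap A)^[n] (a, b) = p} =
      {p : k × (Fin N → k) |
        p.2 ∈ zarClosureN ((fun g : Matrix (Fin N) (Fin N) k => g.mulVec b) '' GA A)} := by
  classical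
  set Gb : Set (Fin N → k) := (fun g : Matrix (Fin N) (Fin N) k => g.mulVec b) '' GA A with hGbdef
  set O : ℕ → Set (k × (Fin N → k)) :=
    fun m => {p | ∃ j : ℕ, (skewMap A)^[m + j] (a, b) = p} with hOdef
  set Z : ℕ → Set (k × (Fin N → k)) := fun m => zarClosure1 (O m) with hZdef
  have hOsub : ∀ m, O (m + 1) ⊆ O m := by
    rintro m p ⟨j, rfl⟩
    exact ⟨j + 1, by rw [show m + (j + 1) = m + 1 + j by omega]⟩
  have hZanti : Antitone Z :=
    antitone_nat_of_succ_le fun m => zarClosure1_mono (hOsub m)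
  have hOim : ∀ m, skewMap A '' O m = O (m + 1) := by
    intro m
    ext p
    constructor
    · rintro ⟨q, ⟨j, rfl⟩, rfl⟩
      exact ⟨j, by rw [show m + 1 + j = (m + j) + 1 by omega, Function.iterate_succ_apply']⟩
    · rintro ⟨j, rfl⟩
      exact ⟨(skewMap A)^[m + j] (a, b), ⟨j, rfl⟩, by
        rw [show m + 1 + j = (m + j) + 1 by omega, Function.iterate_succ_apply']⟩
  have hZim : ∀ m, skewMap A '' Z m = Z (m + 1) := by
    intro m
    rw [hZdef]
    rw [closure_image (isPolyMap_skew A) (isPolyMap_inv A) (invMap_skewMap A hA)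
      (skewMap_invMap A hA), hOim]
  have hmono : Monotone (fun m => vIdeal (Z m)) := fun m m' hmm' => vIdeal_anti (hZanti hmm')
  obtain ⟨n, hn⟩ := (monotone_stabilizes_iff_noetherian.mpr inferInstance)
    ⟨fun m => vIdeal (Z m), hmono⟩
  have hZeq : Z n = Z (n + 1) := by
    have hid : vIdeal (Z n) = vIdeal (Z (n + 1)) := hn (n + 1) (Nat.le_succ n)
    calc Z n = {p | ∀ g ∈ vIdeal (Z n), MvPolynomial.eval (coords p) g = 0} :=
          eq_zeroLocus_vIdeal (isAlg_zarClosure1 _)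
      _ = {p | ∀ g ∈ vIdeal (Z (n + 1)), MvPolynomial.eval (coords p) g = 0} := by rw [hid]
      _ = Z (n + 1) := (eq_zeroLocus_vIdeal (isAlg_zarClosure1 _)).symm
  have hinv : skewMap A '' Z n = Z n := by rw [hZim n, ← hZeq]
  obtain ⟨V₀, hV₀alg, hV₀⟩ := hstraight (Z n) (isAlg_zarClosure1 _) hinv
  have hinv' : skewMap A '' {p : k × (Fin N → k) | p.2 ∈ V₀} = {p : k × (Fin N → k) | p.2 ∈ V₀} := by
    rw [← hV₀]
    exact hinv
  have hbn : (prodMat A a n).mulVec b ∈ V₀ := by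
    have hmem : (skewMap A)^[n + 0] (a, b) ∈ Z n := subset_zarClosure1 _ ⟨0, rfl⟩
    rw [hV₀] at hmem
    rw [Nat.add_zero, iterate_skewMap] at hmem
    exact hmem
  have hb : b ∈ V₀ :=
    mulVec_image_mem (isUnit_det_prodMat hA a n) (prodMat_stab hinv' a n) hbn
  have hGAmem : ∀ m, prodMat A a m ∈ GA A := by
    intro m
    refine ⟨isUnit_det_prodMat hA a m, ?_⟩
    intro V hValg hVinv
    obtain ⟨W₀, hW₀alg, rfl⟩ := hstraight V hValg hVinv
    exact prodMat_stab hVinv a m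
  have hGb : Gb ⊆ V₀ := by
    rintro _ ⟨g, hg, rfl⟩
    have h2 := hg.2 (Z n) (isAlg_zarClosure1 _) hinv
    have hfib : {y : Fin N → k | ((0 : k), y) ∈ Z n} = V₀ := by rw [hV₀]; rfl
    rw [hfib] at h2
    rw [← h2]
    exact ⟨b, hb, rfl⟩
  have hC : zarClosureN Gb ⊆ V₀ := zarClosureN_subset hV₀alg hGb
  have hO0 : O 0 = {p : k × (Fin N → k) | ∃ n : ℕ, (skewMap A)^[n] (a, b) = p} := by
    ext p
    simp only [hOdef, Nat.zero_add, Set.mem_setOf_eq]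
  have hOrb : O 0 ⊆ {p : k × (Fin N → k) | p.2 ∈ zarClosureN Gb} := by
    rw [hO0]
    rintro _ ⟨m, rfl⟩
    show ((skewMap A)^[m] (a, b)).2 ∈ zarClosureN Gb
    rw [iterate_skewMap]
    exact subset_zarClosureN _ ⟨prodMat A a m, hGAmem m, rfl⟩
  apply subset_antisymm
  · rw [← hO0]
    exact zarClosure1_subset (isAlg_cylClosureN _) hOrb
  · intro p hp
    have hpV : p ∈ Z n := by
      rw [hV₀]
      exact hC hp
    have hpZ0 : p ∈ Z 0 := hZanti (Nat.zero_le n) hpV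
    rw [hZdef] at hpZ0
    rw [← hO0]
    exact hpZ0
end
end

section
/- Let N = 2 and let A = diag(a₁, a₂) be a constant diagonal matrix with a₁, a₂ nonzero elements of k. Then A is straight: every algebraic subset of k × k² invariant under the automorphism f_A : (x, y₁, y₂) ↦ (x+1, a₁y₁, a₂y₂) equals k × V₀ for some algebraic subset V₀ of k². -/
noncomputable section

/-- A polynomial over a characteristic-zero field vanishing at all naturals is zero. -/
lemma poly_eq_zero_of_nat_eval {k : Type*} [Field k] [CharZero k] {p : Polynomial k}
    (h : ∀ n : ℕ, p.eval (n : k) = 0) : p = 0 := by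
  refine p.eq_zero_of_infinite_isRoot ?_
  refine (Set.infinite_range_of_injective (f := (Nat.cast : ℕ → k)) Nat.cast_injective).mono ?_
  rintro x ⟨n, rfl⟩
  exact h n

/-- Auxiliary form of the exponential-polynomial vanishing lemma, by induction on the total
measure `∑ (deg + 1)`. -/
lemma expPoly' {k : Type*} [Field k] [CharZero k] :
    ∀ (M : ℕ) (s : Finset k) (p : k → Polynomial k),
      (∑ μ ∈ s, ((p μ).natDegree + 1)) ≤ M →
      (∀ μ ∈ s, μ ≠ 0) → (∀ μ ∈ s, p μ ≠ 0) →
      (∀ n : ℕ, ∑ μ ∈ s, (p μ).eval (n : k) * μ ^ n = 0) →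
      s = ∅ := by
  intro M
  induction M with
  | zero =>
    intro s p hM h0 hp hsum
    rcases Finset.eq_empty_or_nonempty s with h | ⟨μ, hμ⟩
    · exact h
    · exfalso
      have : 1 ≤ ∑ μ ∈ s, ((p μ).natDegree + 1) :=
        le_trans (Nat.le_add_left 1 _) (Finset.single_le_sum (f := fun μ => (p μ).natDegree + 1)
          (fun _ _ => Nat.zero_le _) hμ)
      omega
  | succ M ih =>
    intro s p hM h0 hp hsum
    classical
    rcases Finset.eq_empty_or_nonempty s with h | ⟨μ, hμ⟩
    · exact h
    exfalso
    set T : Polynomial k := Polynomial.X + Polynomial.C 1 with hT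
    set q : k → Polynomial k := fun lam =>
      Polynomial.C lam * (p lam).comp T - Polynomial.C μ * p lam with hq
    set s' : Finset k := s.filter (fun lam => q lam ≠ 0) with hs'
    have hTd : T.natDegree = 1 := Polynomial.natDegree_X_add_C 1
    have hTl : T.leadingCoeff = 1 := by
      rw [hT, Polynomial.leadingCoeff_X_add_C]
    have hcompdeg : ∀ lam : k, ((p lam).comp T).natDegree = (p lam).natDegree := by
      intro lam
      rw [Polynomial.natDegree_comp, hTd, mul_one]
    have hcomplead : ∀ lam : k, ((p lam).comp T).leadingCoeff = (p lam).leadingCoeff := by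
      intro lam
      rcases eq_or_ne (p lam) 0 with h | h
      · simp [h]
      rw [Polynomial.leadingCoeff_comp (by rw [hTd]; exact one_ne_zero), hTl, one_pow, mul_one]
    have hqne : ∀ lam ∈ s, lam ≠ μ → q lam ≠ 0 := by
      intro lam hlam hne h0'
      have hple := hp lam hlam
      have heq : Polynomial.C lam * (p lam).comp T = Polynomial.C μ * p lam := by
        have := h0'
        rw [hq] at this
        simpa [sub_eq_zero] using this
      have hlead := congrArg Polynomial.leadingCoeff heq
      rw [Polynomial.leadingCoeff_mul, Polynomial.leadingCoeff_mul, Polynomial.leadingCoeff_C,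
        Polynomial.leadingCoeff_C, hcomplead] at hlead
      have hlc : (p lam).leadingCoeff ≠ 0 := Polynomial.leadingCoeff_ne_zero.mpr hple
      exact hne (mul_right_cancel₀ hlc hlead)
    have hqmu : q μ ≠ 0 → (q μ).natDegree + 1 ≤ (p μ).natDegree := by
      intro hqm
      have hpm : p μ ≠ 0 := hp μ hμ
      have hd1 : (p μ).natDegree ≠ 0 := by
        intro hd0
        apply hqm
        have hc : p μ = Polynomial.C ((p μ).coeff 0) := Polynomial.eq_C_of_natDegree_eq_zero hd0
        rw [hq]
        simp only []
        rw [hc]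
        simp [mul_comm]
      have hsub : ((p μ).comp T - p μ).natDegree < (p μ).natDegree := by
        rcases eq_or_ne ((p μ).comp T - p μ) 0 with h | h
        · rw [h]; simpa using Nat.pos_of_ne_zero hd1
        have hcompne : (p μ).comp T ≠ 0 := by
          intro hc
          apply hpm
          have := hcomplead μ
          rw [hc] at this
          exact Polynomial.leadingCoeff_eq_zero.mp (by simpa using this.symm)
        have hdeg : ((p μ).comp T).degree = (p μ).degree := by
          rw [Polynomial.degree_eq_natDegree hcompne, Polynomial.degree_eq_natDegree hpm, hcompdeg]
        have hlt := Polynomial.degree_sub_lt hdeg hcompne (hcomplead μ)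
        rw [hdeg] at hlt
        exact Polynomial.natDegree_lt_natDegree h hlt
      have hqeq : q μ = Polynomial.C μ * ((p μ).comp T - p μ) := by
        rw [hq]; ring
      have : (q μ).natDegree ≤ ((p μ).comp T - p μ).natDegree := by
        rw [hqeq]
        exact le_trans (Polynomial.natDegree_mul_le) (by simp)
      omega
    have hmeas : (∑ lam ∈ s', ((q lam).natDegree + 1)) ≤ M := by
      have h1 : ∀ lam ∈ s', (q lam).natDegree + 1 ≤
          (if lam = μ then (p μ).natDegree else (p lam).natDegree + 1) := by
        intro lam hlam
        have hql : q lam ≠ 0 := (Finset.mem_filter.mp hlam).2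
        rcases eq_or_ne lam μ with rfl | hne
        · simp only [if_pos rfl]; exact hqmu hql
        · simp only [if_neg hne]
          have hle : (q lam).natDegree ≤ max ((Polynomial.C lam * (p lam).comp T).natDegree)
              ((Polynomial.C μ * p lam).natDegree) := Polynomial.natDegree_sub_le _ _
          have h2 : (Polynomial.C lam * (p lam).comp T).natDegree ≤ (p lam).natDegree :=
            le_trans Polynomial.natDegree_mul_le (by simp [hcompdeg])
          have h3 : (Polynomial.C μ * p lam).natDegree ≤ (p lam).natDegree :=
            le_trans Polynomial.natDegree_mul_le (by simp)
          omega
      calc ∑ lam ∈ s', ((q lam).natDegree + 1)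
          ≤ ∑ lam ∈ s', (if lam = μ then (p μ).natDegree else (p lam).natDegree + 1) :=
            Finset.sum_le_sum h1
        _ ≤ ∑ lam ∈ s, (if lam = μ then (p μ).natDegree else (p lam).natDegree + 1) :=
            Finset.sum_le_sum_of_subset (Finset.filter_subset _ _)
        _ ≤ M := by
            rw [← Finset.add_sum_erase _ _ hμ, if_pos rfl]
            rw [← Finset.add_sum_erase _ (fun μ => (p μ).natDegree + 1) hμ] at hM
            have he : ∑ lam ∈ s.erase μ, (if lam = μ then (p μ).natDegree else (p lam).natDegree + 1)
                = ∑ lam ∈ s.erase μ, ((p lam).natDegree + 1) :=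
              Finset.sum_congr rfl fun lam hlam => if_neg (Finset.ne_of_mem_erase hlam)
            omega
    have hsum' : ∀ n : ℕ, ∑ lam ∈ s', (q lam).eval (n : k) * lam ^ n = 0 := by
      intro n
      have e1 : ∑ lam ∈ s', (q lam).eval (n : k) * lam ^ n
          = ∑ lam ∈ s, (q lam).eval (n : k) * lam ^ n := by
        refine Finset.sum_subset (Finset.filter_subset _ _) ?_
        intro lam hlam hlam'
        have : q lam = 0 := by
          by_contra h
          exact hlam' (Finset.mem_filter.mpr ⟨hlam, h⟩)
        simp [this]
      rw [e1]
      have e2 : ∀ lam ∈ s, (q lam).eval (n : k) * lam ^ n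
          = lam * ((p lam).eval ((n : k) + 1) * lam ^ n) - μ * ((p lam).eval (n : k) * lam ^ n) := by
        intro lam _
        rw [hq]
        simp only [Polynomial.eval_sub, Polynomial.eval_mul, Polynomial.eval_C,
          Polynomial.eval_comp, hT, Polynomial.eval_add, Polynomial.eval_X, Polynomial.eval_one]
        ring
      rw [Finset.sum_congr rfl e2, Finset.sum_sub_distrib]
      have h4 : ∑ lam ∈ s, lam * ((p lam).eval ((n : k) + 1) * lam ^ n) = 0 := by
        have h5 := hsum (n + 1)
        push_cast at h5
        rw [← h5]
        refine Finset.sum_congr rfl fun lam _ => ?_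
        rw [pow_succ]
        ring
      rw [h4, ← Finset.mul_sum, hsum n, mul_zero, sub_zero]
    have hempty : s' = ∅ := by
      refine ih s' q hmeas ?_ ?_ hsum'
      · exact fun lam hlam => h0 lam (Finset.mem_filter.mp hlam).1
      · exact fun lam hlam => (Finset.mem_filter.mp hlam).2
    have hsmu : s = {μ} := by
      apply Finset.eq_singleton_iff_unique_mem.mpr
      refine ⟨hμ, fun lam hlam => ?_⟩
      by_contra hne
      have : lam ∈ s' := Finset.mem_filter.mpr ⟨hlam, hqne lam hlam hne⟩
      rw [hempty] at this
      exact absurd this (Finset.notMem_empty lam)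
    have hzero : ∀ n : ℕ, (p μ).eval (n : k) = 0 := by
      intro n
      have := hsum n
      rw [hsmu, Finset.sum_singleton] at this
      have hμ0 : μ ^ n ≠ 0 := pow_ne_zero n (h0 μ hμ)
      exact (mul_eq_zero.mp this).resolve_right hμ0
    exact hp μ hμ (poly_eq_zero_of_nat_eval hzero)

/-- Exponential-polynomial vanishing: if `∑ p_μ(n) μ^n = 0` for all naturals `n`, with the
`μ` nonzero and distinct, then each `p_μ = 0`. -/
lemma expPoly {k : Type*} [Field k] [CharZero k] (s : Finset k) (p : k → Polynomial k)
    (h0 : ∀ μ ∈ s, μ ≠ 0)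
    (hsum : ∀ n : ℕ, ∑ μ ∈ s, (p μ).eval (n : k) * μ ^ n = 0) :
    ∀ μ ∈ s, p μ = 0 := by
  classical
  intro μ hμ
  by_contra hne
  set s' : Finset k := s.filter (fun lam => p lam ≠ 0) with hs'
  have hsum' : ∀ n : ℕ, ∑ lam ∈ s', (p lam).eval (n : k) * lam ^ n = 0 := by
    intro n
    rw [show (∑ lam ∈ s', (p lam).eval (n : k) * lam ^ n)
        = ∑ lam ∈ s, (p lam).eval (n : k) * lam ^ n from
      Finset.sum_subset (Finset.filter_subset _ _) (fun lam hlam hlam' => by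
        have : p lam = 0 := by
          by_contra h
          exact hlam' (Finset.mem_filter.mpr ⟨hlam, h⟩)
        simp [this])]
    exact hsum n
  have := expPoly' (∑ lam ∈ s', ((p lam).natDegree + 1)) s' p le_rfl
    (fun lam hlam => h0 lam (Finset.mem_filter.mp hlam).1)
    (fun lam hlam => (Finset.mem_filter.mp hlam).2) hsum'
  have : μ ∈ (∅ : Finset k) := this ▸ Finset.mem_filter.mpr ⟨hμ, hne⟩
  exact absurd this (Finset.notMem_empty μ)

lemma diag_skew {k : Type*} [Field k] (a₁ a₂ : k) (p : k × (Fin 2 → k)) :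
    skewMap !![Polynomial.C a₁, 0; 0, Polynomial.C a₂] p
      = (p.1 + 1, fun i => (![a₁, a₂] i) * p.2 i) := by
  unfold skewMap evalMat
  refine Prod.ext rfl ?_
  funext i
  fin_cases i <;>
    simp [Matrix.mulVec, dotProduct, Fin.sum_univ_two]

lemma diag_iter {k : Type*} [Field k] (a₁ a₂ : k) (p : k × (Fin 2 → k)) (n : ℕ) :
    (skewMap !![Polynomial.C a₁, 0; 0, Polynomial.C a₂])^[n] p
      = (p.1 + n, fun i => (![a₁, a₂] i) ^ n * p.2 i) := by
  induction n with
  | zero => simp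
  | succ n ih =>
    rw [Function.iterate_succ_apply', ih, diag_skew]
    refine Prod.ext ?_ ?_
    · push_cast
      simp [add_assoc]
    · funext i
      simp only []
      rw [pow_succ]
      ring

/-- Key step: if a polynomial `F` vanishes along the forward orbit of `(x₀, y)` under the
diagonal skew map, then `F(x, y) = 0` for every `x`. -/
lemma key {k : Type*} [Field k] [CharZero k] (a₁ a₂ : k) (h₁ : a₁ ≠ 0) (h₂ : a₂ ≠ 0)
    (F : MvPolynomial (Option (Fin 2)) k) (x₀ : k) (y : Fin 2 → k)
    (h : ∀ n : ℕ, MvPolynomial.eval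
        (fun i => Option.elim i (x₀ + n) (fun j => (![a₁, a₂] j) ^ n * y j)) F = 0) :
    ∀ x : k, MvPolynomial.eval (fun i => Option.elim i x y) F = 0 := by
  classical
  set c : (Option (Fin 2) →₀ ℕ) → k :=
    fun d => F.coeff d * y 0 ^ d (some 0) * y 1 ^ d (some 1) with hc
  set e : (Option (Fin 2) →₀ ℕ) → k :=
    fun d => a₁ ^ d (some 0) * a₂ ^ d (some 1) with he
  set p : k → Polynomial k := fun μ =>
    ∑ d ∈ F.support.filter (fun d => e d = μ),
      Polynomial.C (c d) * (Polynomial.C x₀ + Polynomial.X) ^ (d none) with hpdef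
  have hexp : ∀ v : Option (Fin 2) → k, MvPolynomial.eval v F
      = ∑ d ∈ F.support, F.coeff d *
          (v none ^ d none * (v (some 0) ^ d (some 0) * v (some 1) ^ d (some 1))) := by
    intro v
    rw [MvPolynomial.eval_eq']
    refine Finset.sum_congr rfl fun d _ => ?_
    rw [Fintype.prod_option, Fin.prod_univ_two]
  have hpow : ∀ (a : k) (m j : ℕ), (a ^ m) ^ j = (a ^ j) ^ m := by
    intro a m j; rw [← pow_mul, mul_comm, pow_mul]
  have hpeval : ∀ (μ : k) (t : k), (p μ).eval t
      = ∑ d ∈ F.support.filter (fun d => e d = μ), c d * (x₀ + t) ^ (d none) := by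
    intro μ t
    rw [hpdef]
    rw [Polynomial.eval_finset_sum]
    refine Finset.sum_congr rfl fun d _ => ?_
    rw [Polynomial.eval_mul, Polynomial.eval_C, Polynomial.eval_pow, Polynomial.eval_add,
      Polynomial.eval_C, Polynomial.eval_X]
  have horb : ∀ n : ℕ, ∑ μ ∈ F.support.image e, (p μ).eval (n : k) * μ ^ n = 0 := by
    intro n
    have lhs_eq : ∑ μ ∈ F.support.image e, (p μ).eval (n : k) * μ ^ n
        = ∑ d ∈ F.support, c d * (x₀ + n) ^ (d none) * (e d) ^ n := by
      rw [← Finset.sum_fiberwise_of_maps_to (fun d hd => Finset.mem_image_of_mem e hd)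
        (fun d => c d * (x₀ + (n : k)) ^ (d none) * (e d) ^ n)]
      refine Finset.sum_congr rfl fun μ hμ => ?_
      rw [hpeval, Finset.sum_mul]
      refine Finset.sum_congr rfl fun d hd => ?_
      rw [(Finset.mem_filter.mp hd).2]
    rw [lhs_eq, ← h n, hexp]
    refine Finset.sum_congr rfl fun d _ => ?_
    simp only [Option.elim, Matrix.cons_val_zero, Matrix.cons_val_one, Matrix.head_cons]
    rw [hc, he]
    simp only []
    rw [mul_pow (a₁ ^ d (some 0)), mul_pow (a₁ ^ n), mul_pow (a₂ ^ n),
      hpow a₁ n, hpow a₂ n]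
    ring
  have hne0 : ∀ μ ∈ F.support.image e, μ ≠ 0 := by
    intro μ hμ
    obtain ⟨d, _, rfl⟩ := Finset.mem_image.mp hμ
    exact mul_ne_zero (pow_ne_zero _ h₁) (pow_ne_zero _ h₂)
  have hp0 : ∀ μ ∈ F.support.image e, p μ = 0 := expPoly _ _ hne0 horb
  intro x
  have hx : x₀ + (x - x₀) = x := by ring
  have e4 : ∑ d ∈ F.support, c d * (x₀ + (x - x₀)) ^ (d none) = 0 := by
    rw [← Finset.sum_fiberwise_of_maps_to (fun d hd => Finset.mem_image_of_mem e hd)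
      (fun d => c d * (x₀ + (x - x₀)) ^ (d none))]
    refine Finset.sum_eq_zero fun μ hμ => ?_
    rw [← hpeval μ (x - x₀), hp0 μ hμ, Polynomial.eval_zero]
  rw [hexp]
  calc ∑ d ∈ F.support, F.coeff d *
        (x ^ d none * (y 0 ^ d (some 0) * y 1 ^ d (some 1)))
      = ∑ d ∈ F.support, c d * (x₀ + (x - x₀)) ^ (d none) := by
        refine Finset.sum_congr rfl fun d _ => ?_
        rw [hx, hc]
        simp only [Option.elim]
        ring
    _ = 0 := e4

/-- Lemma (Ghioca–Xie, Lemma 3.11): for `N = 2` and a constant diagonal matrix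
`A = diag(a₁, a₂)` with `a₁, a₂ ∈ k*`, the matrix `A` is straight: every algebraic subset of
`k × k²` invariant under `f_A : (x, y₁, y₂) ↦ (x+1, a₁y₁, a₂y₂)` equals `k × V₀` for some
algebraic subset `V₀` of `k²`. -/
theorem stmt8 {k : Type*} [Field k] [IsAlgClosed k] [CharZero k]
    (a₁ a₂ : k) (h₁ : a₁ ≠ 0) (h₂ : a₂ ≠ 0) :
    ∀ V : Set (k × (Fin 2 → k)), IsAlg V →
      skewMap !![Polynomial.C a₁, 0; 0, Polynomial.C a₂] '' V = V →
      ∃ V₀ : Set (Fin 2 → k), IsAlgN V₀ ∧ V = {p : k × (Fin 2 → k) | p.2 ∈ V₀} := by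
  intro V hV hinv
  obtain ⟨S, rfl⟩ := hV
  set A := !![Polynomial.C a₁, 0; 0, Polynomial.C a₂] with hA
  set W : Set (k × (Fin 2 → k)) :=
    {p | ∀ f ∈ S, MvPolynomial.eval (fun i => Option.elim i p.1 p.2) f = 0} with hW
  have hfwd : ∀ p ∈ W, skewMap A p ∈ W := by
    intro p hp
    rw [← hinv]
    exact Set.mem_image_of_mem _ hp
  have hit : ∀ (p : k × (Fin 2 → k)), p ∈ W → ∀ n : ℕ, (skewMap A)^[n] p ∈ W := by
    intro p hp n
    induction n with
    | zero => exact hp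
    | succ n ih => rw [Function.iterate_succ_apply']; exact hfwd _ ih
  have hmain : ∀ (x₀ : k) (y : Fin 2 → k), (x₀, y) ∈ W → ∀ x : k, (x, y) ∈ W := by
    intro x₀ y hmem x F hF
    refine key a₁ a₂ h₁ h₂ F x₀ y ?_ x
    intro n
    have h1 := hit (x₀, y) hmem n
    rw [diag_iter] at h1
    exact h1 F hF
  refine ⟨{y : Fin 2 → k | (0, y) ∈ W}, ?_, ?_⟩
  · classical
    refine ⟨(MvPolynomial.aeval
      (fun i : Option (Fin 2) => Option.elim i 0 MvPolynomial.X) :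
        MvPolynomial (Option (Fin 2)) k →ₐ[k] MvPolynomial (Fin 2) k) '' S, ?_⟩
    have hcomm : ∀ (F : MvPolynomial (Option (Fin 2)) k) (y : Fin 2 → k),
        MvPolynomial.eval y (MvPolynomial.aeval
          (fun i : Option (Fin 2) => Option.elim i 0 MvPolynomial.X) F)
        = MvPolynomial.eval (fun i => Option.elim i (0 : k) y) F := by
      intro F y
      have hhom : (MvPolynomial.eval y).comp
          ((MvPolynomial.aeval
            (fun i : Option (Fin 2) => Option.elim i 0 MvPolynomial.X)).toRingHom)
          = MvPolynomial.eval (fun i => Option.elim i (0 : k) y) := by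
        apply MvPolynomial.ringHom_ext
        · intro a; simp
        · rintro (_ | j) <;> simp
      exact RingHom.congr_fun hhom F
    ext y
    constructor
    · intro hy G hG
      obtain ⟨F, hF, rfl⟩ := hG
      rw [hcomm]
      exact hy F hF
    · intro hy F hF
      have := hy _ ⟨F, hF, rfl⟩
      rwa [hcomm] at this
  · ext ⟨x, y⟩
    constructor
    · intro hp
      exact hmain x y hp 0
    · intro hp
      exact hmain 0 y hp x
end
end

section
/- Let a(x), b(x) be polynomials in k[x] and let c be a nonzero constant of k. If a(x) + b(x) = c·a(x+1) and x·a(x) + (x+1)·b(x) = c·b(x+1) hold as identities in k[x], then a(x) = b(x) = 0. In particular, there exist no coprime polynomials a, b in k[x] and nonzero c in k satisfying these two identities. -/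
open Polynomial

/-- From the proof of Proposition 3.14 in Ghioca–Xie: if `a, b ∈ k[x]` and `c ∈ k*` satisfy
`a(x) + b(x) = c·a(x+1)` and `x·a(x) + (x+1)·b(x) = c·b(x+1)`, then `a = b = 0`; in
particular no coprime pair `a, b` satisfies these identities. -/
theorem stmt12 {k : Type*} [Field k] [CharZero k] (a b : Polynomial k) (c : k) (hc : c ≠ 0)
    (h1 : a + b = Polynomial.C c * a.comp (Polynomial.X + 1))
    (h2 : Polynomial.X * a + (Polynomial.X + 1) * b =
      Polynomial.C c * b.comp (Polynomial.X + 1)) :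
    a = 0 ∧ b = 0 := by
  have hcomp : ∀ p : Polynomial k, (p.comp (X + 1)).comp (X - 1) = p := by
    intro p
    rw [Polynomial.comp_assoc]
    simp
  by_cases ha : a = 0
  · subst ha
    simp only [Polynomial.zero_comp, mul_zero, zero_add] at h1
    exact ⟨rfl, h1⟩
  by_cases hb : b = 0
  · subst hb
    simp only [Polynomial.zero_comp, mul_zero, add_zero] at h2
    exact absurd (by simpa [Polynomial.X_ne_zero] using mul_eq_zero.mp h2) ha
  exfalso
  set A := a.comp (X + 1) with hAdef
  set B := b.comp (X + 1) with hBdef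
  have hA : A ≠ 0 := fun h => ha (by rw [← hcomp a, ← hAdef, h, Polynomial.zero_comp])
  have hX1 : (Polynomial.X + 1 : Polynomial k).natDegree = 1 := by
    rw [show (1 : Polynomial k) = Polynomial.C 1 from (map_one _).symm,
      Polynomial.natDegree_X_add_C]
  have hdegA : A.natDegree = a.natDegree := by
    rw [hAdef, Polynomial.natDegree_comp, hX1, mul_one]
  have hdegB : B.natDegree = b.natDegree := by
    rw [hBdef, Polynomial.natDegree_comp, hX1, mul_one]
  have hCc : Polynomial.C c ≠ 0 := by simpa using hc
  have hble : b.natDegree ≤ a.natDegree := by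
    have hb' : b = Polynomial.C c * A - a := by linear_combination h1
    calc b.natDegree ≤ max (Polynomial.C c * A).natDegree a.natDegree := by
          rw [hb']; exact Polynomial.natDegree_sub_le _ _
      _ ≤ a.natDegree := by
          rw [Polynomial.natDegree_C_mul hc, hdegA]; simp
  have key : Polynomial.X * (Polynomial.C c * A) = Polynomial.C c * B - b := by
    linear_combination h2 - Polynomial.X * h1
  have hlhs : (Polynomial.X * (Polynomial.C c * A)).natDegree = 1 + a.natDegree := by
    rw [Polynomial.natDegree_mul Polynomial.X_ne_zero (mul_ne_zero hCc hA),
      Polynomial.natDegree_mul hCc hA, Polynomial.natDegree_X, Polynomial.natDegree_C,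
      hdegA]
    omega
  have hrhs : (Polynomial.C c * B - b).natDegree ≤ a.natDegree := by
    calc (Polynomial.C c * B - b).natDegree
        ≤ max (Polynomial.C c * B).natDegree b.natDegree := Polynomial.natDegree_sub_le _ _
      _ ≤ a.natDegree := by
          rw [Polynomial.natDegree_C_mul hc, hdegB]; simpa using hble
  rw [key] at hlhs
  omega
end

section
/- Let a₁, a₂ be distinct nonzero elements of k and let d be a natural number. Then for every polynomial b(x) in k[x] of degree at most d, there exists a unique polynomial u(x) in k[x] of degree at most d such that a₂·u(x+1) − a₁·u(x) = b(x). Equivalently, the linear map P(x) ↦ a₂·P(x+1) − a₁·P(x) on the space of polynomials of degree at most d is bijective. -/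
open Polynomial

/-- The Taylor shift preserves degree. -/
lemma degree_taylor_aux {k : Type*} [Field k] (r : k) (p : Polynomial k) :
    (Polynomial.taylor r p).degree = p.degree := by
  rcases eq_or_ne p 0 with rfl | h
  · simp
  · rw [degree_eq_natDegree (by
        rw [taylor_apply]; exact comp_X_add_C_ne_zero_iff.mpr h),
      degree_eq_natDegree h, natDegree_taylor]

/-- Leading coefficient of the Taylor shift. -/
lemma leadingCoeff_taylor_aux {k : Type*} [Field k] (r : k) (p : Polynomial k) :
    (Polynomial.taylor r p).leadingCoeff = p.leadingCoeff := by
  rw [taylor_apply, leadingCoeff_comp (by simp), leadingCoeff_X_add_C, one_pow, mul_one]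

/-- From the proof of Proposition 3.12 in Ghioca–Xie: for distinct nonzero `a₁, a₂ ∈ k` and
`d ∈ ℕ`, for every `b ∈ k[x]` with `deg b ≤ d` there is a unique `u ∈ k[x]` with `deg u ≤ d`
and `a₂·u(x+1) − a₁·u(x) = b(x)`; i.e. the linear map `P(x) ↦ a₂·P(x+1) − a₁·P(x)` on
polynomials of degree at most `d` is bijective. -/
theorem stmt13 {k : Type*} [Field k] [CharZero k] (a₁ a₂ : k)
    (h₁ : a₁ ≠ 0) (h₂ : a₂ ≠ 0) (hne : a₁ ≠ a₂) (d : ℕ)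
    (b : Polynomial k) (hb : b.degree ≤ (d : ℕ)) :
    ∃! u : Polynomial k, u.degree ≤ (d : ℕ) ∧
      Polynomial.C a₂ * u.comp (Polynomial.X + 1) - Polynomial.C a₁ * u = b := by
  -- the global linear map
  set f : Polynomial k →ₗ[k] Polynomial k :=
    a₂ • Polynomial.taylor 1 - a₁ • LinearMap.id with hf
  have hfapp : ∀ u : Polynomial k,
      f u = Polynomial.C a₂ * u.comp (Polynomial.X + 1) - Polynomial.C a₁ * u := by
    intro u
    simp [hf, taylor_apply, smul_eq_C_mul]
  -- f is injective
  have hinj : Function.Injective f := by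
    rw [← LinearMap.ker_eq_bot, LinearMap.ker_eq_bot']
    intro u hu
    by_contra hu0
    have h0 : Polynomial.C a₂ * u.comp (Polynomial.X + 1) = Polynomial.C a₁ * u :=
      sub_eq_zero.mp (by rw [← hfapp]; exact hu)
    have htl : (u.comp (Polynomial.X + 1)).leadingCoeff = u.leadingCoeff := by
      have := leadingCoeff_taylor_aux (1 : k) u
      rwa [taylor_apply, map_one] at this
    have hlc := congrArg Polynomial.leadingCoeff h0
    rw [leadingCoeff_mul, leadingCoeff_mul, leadingCoeff_C, leadingCoeff_C, htl] at hlc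
    have hlu : u.leadingCoeff ≠ 0 := leadingCoeff_ne_zero.mpr hu0
    exact hne (mul_right_cancel₀ hlu hlc).symm
  -- f maps degreeLT (d+1) to itself
  have hmap : ∀ p ∈ Polynomial.degreeLT k (d + 1), f p ∈ Polynomial.degreeLT k (d + 1) := by
    intro p hp
    rw [Polynomial.mem_degreeLT] at hp ⊢
    have hfp : f p = a₂ • Polynomial.taylor 1 p - a₁ • p := by simp [hf]
    rw [hfp]
    refine (Polynomial.degree_sub_le _ _).trans_lt (max_lt ?_ ?_)
    · exact (Polynomial.degree_smul_le _ _).trans_lt (by rw [degree_taylor_aux]; exact hp)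
    · exact (Polynomial.degree_smul_le _ _).trans_lt hp
  -- restrict to the finite-dimensional space
  set T : Polynomial.degreeLT k (d + 1) →ₗ[k] Polynomial.degreeLT k (d + 1) :=
    f.restrict hmap with hT
  have hTinj : Function.Injective T := by
    intro x y hxy
    have : f x = f y := congrArg Subtype.val hxy
    exact Subtype.ext (hinj this)
  haveI : FiniteDimensional k (Polynomial.degreeLT k (d + 1)) :=
    (Polynomial.degreeLTEquiv k (d + 1)).symm.finiteDimensional
  have hTsurj : Function.Surjective T :=
    (LinearMap.injective_iff_surjective).mp hTinj
  have hbmem : b ∈ Polynomial.degreeLT k (d + 1) := by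
    rw [Polynomial.degreeLT_succ_eq_degreeLE, Polynomial.mem_degreeLE]; exact hb
  obtain ⟨⟨u, hu⟩, huT⟩ := hTsurj ⟨b, hbmem⟩
  have hudeg : u.degree ≤ (d : ℕ) := by
    rwa [Polynomial.degreeLT_succ_eq_degreeLE, Polynomial.mem_degreeLE] at hu
  have hfu : f u = b := congrArg Subtype.val huT
  refine ⟨u, ⟨hudeg, by rw [← hfapp]; exact hfu⟩, ?_⟩
  rintro v ⟨hvdeg, hv⟩
  apply hinj
  rw [hfapp, hfapp, hv, ← hfapp, hfu]
end
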